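/- Let ℓ ≥ 1 be an integer and let k, k' ∈ {π m/(ℓ+1) : m ∈ {1, …, ℓ}}. Then (2/(ℓ+1)) ∑_{x=1}^{ℓ} sin(x k)² cos(x k')² = 1/2 − (1/4)(δ_{k,k'} + δ_{k+k',π}), where δ denotes the Kronecker delta (δ_{a,b} = 1 if a = b and 0 otherwise). -/

import Mathlib

open Real


lemma cos_sum_lattice (n : ℕ) (j : ℤ) :
    ∑ x ∈ Finset.Icc 1 n, Real.cos ((x : ℝ) * (2 * π * (j : ℝ) / ((n : ℝ) + 1))) =
      if ((n : ℤ) + 1) ∣ j then (n : ℝ) else -1 := by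
  have hne : (n : ℝ) + 1 ≠ 0 := by positivity
  split_ifs with hdvd
  · obtain ⟨t, ht⟩ := hdvd
    have h1 : ∀ x ∈ Finset.Icc 1 n, Real.cos ((x : ℝ) * (2 * π * (j : ℝ) / ((n : ℝ) + 1))) = 1 := by
      intro x hx
      have harg : (x : ℝ) * (2 * π * (j : ℝ) / ((n : ℝ) + 1)) = ((x * t : ℤ) : ℝ) * (2 * π) := by
        have hj : (j : ℝ) = ((n : ℝ) + 1) * (t : ℝ) := by exact_mod_cast congrArg (Int.cast : ℤ → ℝ) ht
        field_simp [hj]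
        push_cast [hj]; ring
      rw [harg, Real.cos_int_mul_two_pi]
    rw [Finset.sum_congr rfl h1]
    simp
  · set θ : ℝ := 2 * π * (j : ℝ) / ((n : ℝ) + 1) with hθ
    have hc1 : Complex.exp ((θ : ℂ) * Complex.I) ≠ 1 := by
      intro h
      rw [Complex.exp_eq_one_iff] at h
      obtain ⟨t, ht⟩ := h
      have hI : (Complex.I : ℂ) ≠ 0 := Complex.I_ne_zero
      have hθt : (θ : ℂ) = (t : ℂ) * (2 * π) := by
        have h2 : (θ : ℂ) * Complex.I = ((t : ℂ) * (2 * π)) * Complex.I := by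
          linear_combination ht
        exact mul_right_cancel₀ hI h2
      have hθr : θ = (t : ℝ) * (2 * π) := by exact_mod_cast hθt
      apply hdvd
      refine ⟨t, ?_⟩
      have hπ : (π : ℝ) ≠ 0 := Real.pi_ne_zero
      have h2π : (2 * π : ℝ) ≠ 0 := by positivity
      have : (j : ℝ) = ((n : ℝ) + 1) * (t : ℝ) := by
        rw [hθ] at hθr
        have h3 : (j : ℝ) * (2 * π) = (((n : ℝ) + 1) * (t : ℝ)) * (2 * π) := by
          field_simp at hθr
          linear_combination (2 * π) * hθr
        exact mul_right_cancel₀ h2π h3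
      exact_mod_cast this
    have hpow : Complex.exp ((θ : ℂ) * Complex.I) ^ (n + 1) = 1 := by
      rw [← Complex.exp_nat_mul]
      have harg : ((n + 1 : ℕ) : ℂ) * ((θ : ℂ) * Complex.I) = (j : ℂ) * (2 * π * Complex.I) := by
        have hnc : ((n : ℂ) + 1) ≠ 0 := by exact_mod_cast hne
        push_cast [hθ]
        field_simp
      rw [harg, Complex.exp_int_mul_two_pi_mul_I]
    have hsum : ∑ x ∈ Finset.range (n + 1), Complex.exp ((θ : ℂ) * Complex.I) ^ x = 0 := by
      rw [geom_sum_eq hc1, hpow]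
      simp
    have hre : ∑ x ∈ Finset.range (n + 1), Real.cos ((x : ℝ) * θ) = 0 := by
      have := congrArg Complex.re hsum
      rw [Complex.re_sum] at this
      simp only [Complex.zero_re] at this
      rw [← this]
      refine Finset.sum_congr rfl fun x _ => ?_
      rw [← Complex.exp_nat_mul]
      have : ((x : ℂ)) * ((θ : ℂ) * Complex.I) = ((x * θ : ℝ) : ℂ) * Complex.I := by
        push_cast; ring
      rw [this, Complex.exp_ofReal_mul_I_re]
    have hsplit : Finset.range (n + 1) = insert 0 (Finset.Icc 1 n) := by
      ext x; simp [Finset.mem_range, Finset.mem_Icc]; omega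
    rw [hsplit, Finset.sum_insert (by simp)] at hre
    simp at hre
    linarith

lemma ptwise (a b : ℝ) : Real.sin a ^ 2 * Real.cos b ^ 2 =
    1/4 - (1/4) * Real.cos (2*a) + (1/4) * Real.cos (2*b)
      - (1/8) * Real.cos (2*a + 2*b) - (1/8) * Real.cos (2*a - 2*b) := by
  rw [Real.cos_add, Real.cos_sub, Real.cos_two_mul, Real.cos_two_mul,
    Real.sin_two_mul, Real.sin_two_mul]
  nlinarith [Real.sin_sq_add_cos_sq a, Real.sin_sq_add_cos_sq b]


/-- For momenta `k, k'` in the one-dimensional Dirichlet lattice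
`{π m/(ℓ+1) : m ∈ {1,…,ℓ}}`,
`(2/(ℓ+1)) ∑_{x=1}^ℓ sin(xk)² cos(xk')² = 1/2 − (1/4)(δ_{k,k'} + δ_{k+k',π})`. -/
theorem trig_sum_sin_sq_cos_sq (ℓ : ℕ) (hℓ : 1 ≤ ℓ) (k k' : ℝ)
    (hk : ∃ m ∈ Finset.Icc 1 ℓ, k = π * (m : ℝ) / (ℓ + 1))
    (hk' : ∃ m ∈ Finset.Icc 1 ℓ, k' = π * (m : ℝ) / (ℓ + 1)) :
    (2 / ((ℓ : ℝ) + 1)) * ∑ x ∈ Finset.Icc 1 ℓ,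
        Real.sin ((x : ℝ) * k) ^ 2 * Real.cos ((x : ℝ) * k') ^ 2 =
      1 / 2 - (1 / 4) * ((if k = k' then (1 : ℝ) else 0) +
        (if k + k' = π then (1 : ℝ) else 0)) := by
  obtain ⟨m, hm, rfl⟩ := hk
  obtain ⟨m', hm', rfl⟩ := hk'
  rw [Finset.mem_Icc] at hm hm'
  have hne : (ℓ : ℝ) + 1 ≠ 0 := by positivity
  have hπ : (π : ℝ) ≠ 0 := Real.pi_ne_zero
  have hS : ∑ x ∈ Finset.Icc 1 ℓ,
      Real.sin ((x : ℝ) * (π * (m : ℝ) / (ℓ + 1))) ^ 2 *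
        Real.cos ((x : ℝ) * (π * (m' : ℝ) / (ℓ + 1))) ^ 2 =
      ∑ x ∈ Finset.Icc 1 ℓ,
        (1/4 - (1/4) * Real.cos ((x : ℝ) * (2 * π * ((m : ℤ) : ℝ) / ((ℓ : ℝ) + 1)))
          + (1/4) * Real.cos ((x : ℝ) * (2 * π * ((m' : ℤ) : ℝ) / ((ℓ : ℝ) + 1)))
          - (1/8) * Real.cos ((x : ℝ) * (2 * π * ((((m : ℤ) + (m' : ℤ)) : ℤ) : ℝ) / ((ℓ : ℝ) + 1)))
          - (1/8) * Real.cos ((x : ℝ) * (2 * π * ((((m : ℤ) - (m' : ℤ)) : ℤ) : ℝ) / ((ℓ : ℝ) + 1)))) := by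
    refine Finset.sum_congr rfl fun x _ => ?_
    rw [ptwise]
    congr 1
    · congr 1
      · congr 1
        · congr 2
          push_cast; ring
        · congr 1
          push_cast; ring
      · congr 2
        push_cast; ring
    · congr 2
      push_cast; ring
  rw [hS]
  rw [Finset.sum_sub_distrib, Finset.sum_sub_distrib, Finset.sum_add_distrib,
    Finset.sum_sub_distrib, ← Finset.mul_sum, ← Finset.mul_sum, ← Finset.mul_sum,
    ← Finset.mul_sum, Finset.sum_const, Nat.card_Icc]
  rw [cos_sum_lattice ℓ (m : ℤ), cos_sum_lattice ℓ (m' : ℤ),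
    cos_sum_lattice ℓ ((m : ℤ) + m'), cos_sum_lattice ℓ ((m : ℤ) - m')]
  have hm1 : (1 : ℤ) ≤ (m : ℤ) := by exact_mod_cast hm.1
  have hm2 : ((m : ℤ)) ≤ (ℓ : ℤ) := by exact_mod_cast hm.2
  have hm1' : (1 : ℤ) ≤ (m' : ℤ) := by exact_mod_cast hm'.1
  have hm2' : ((m' : ℤ)) ≤ (ℓ : ℤ) := by exact_mod_cast hm'.2
  have hd1 : ¬ ((ℓ : ℤ) + 1 ∣ (m : ℤ)) := by
    intro h
    have := Int.le_of_dvd (by omega) h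
    omega
  have hd2 : ¬ ((ℓ : ℤ) + 1 ∣ (m' : ℤ)) := by
    intro h
    have := Int.le_of_dvd (by omega) h
    omega
  have hd3 : ((ℓ : ℤ) + 1 ∣ (m : ℤ) + m') ↔ m + m' = ℓ + 1 := by
    constructor
    · intro h
      obtain ⟨t, ht⟩ := h
      have h1 : 1 ≤ t := by nlinarith
      have h2 : t ≤ 1 := by nlinarith
      have : t = 1 := by omega
      subst this
      have : (m : ℤ) + m' = (ℓ : ℤ) + 1 := by omega
      exact_mod_cast this
    · intro h
      exact ⟨1, by omega⟩
  have hd4 : ((ℓ : ℤ) + 1 ∣ (m : ℤ) - m') ↔ m = m' := by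
    constructor
    · intro h
      obtain ⟨t, ht⟩ := h
      have h1 : 0 ≤ t := by nlinarith
      have h2 : t ≤ 0 := by nlinarith
      have : t = 0 := by omega
      subst this
      have : (m : ℤ) = m' := by omega
      exact_mod_cast this
    · intro h
      simp [h]
  have hif1 : (π * (m : ℝ) / (↑ℓ + 1) = π * (m' : ℝ) / (↑ℓ + 1)) ↔ m = m' := by
    constructor
    · intro h
      have h2 : π * (m : ℝ) * (↑ℓ + 1) = π * (m' : ℝ) * (↑ℓ + 1) := by
        rw [div_eq_div_iff hne hne] at h
        linear_combination h
      have h3 : (m : ℝ) = (m' : ℝ) :=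
        mul_left_cancel₀ hπ (mul_right_cancel₀ hne h2)
      exact_mod_cast h3
    · intro h; rw [h]
  have hif2 : (π * (m : ℝ) / (↑ℓ + 1) + π * (m' : ℝ) / (↑ℓ + 1) = π) ↔ m + m' = ℓ + 1 := by
    constructor
    · intro h
      have h2 : π * ((m : ℝ) + m') = π * ((ℓ : ℝ) + 1) := by
        field_simp at h
        linear_combination π * h
      have h3 : (m : ℝ) + m' = (ℓ : ℝ) + 1 := mul_left_cancel₀ hπ h2
      exact_mod_cast h3
    · intro h
      have h3 : (m : ℝ) + m' = (ℓ : ℝ) + 1 := by exact_mod_cast h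
      field_simp
      linear_combination h3
  rw [if_neg hd1, if_neg hd2]
  simp only [hd3, hd4, hif1, hif2, Nat.add_sub_cancel, nsmul_eq_mul]
  split_ifs <;> field_simp <;> ring
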